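/- arXiv:2406.19734 — 2 statements merged into one kernel-verified Lean document; each statement's English description precedes it below -/
import Mathlib

section
/- Let (λ_j)_{j≥1} be a nondecreasing sequence of positive reals with counting function N(λ) = #{j : λ_j ≤ λ} satisfying N(λ) ∼ C λ^α as λ → ∞ for some C, α > 0. Let f : ℝ⁺ → ℝ⁺ be a nonincreasing C¹ function such that f and f' decay faster than any polynomial at infinity. Then for every ε > 0 there exists K(ε) > 0, depending on N but not on f, such that |Σ_{j=1}^∞ f(λ_j) − Cα ∫_{λ₁}^∞ f(λ) λ^(α−1) dλ| ≤ K(ε) f(λ₁) + ε ∫_{λ₁}^∞ f(λ) λ^(α−1) dλ. -/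
open Real Set Filter Asymptotics MeasureTheory Topology


/-- Derivative of a function antitone on `Ici 0` is nonpositive at positive points. -/
lemma stmt8_deriv_nonpos {f : ℝ → ℝ} {x d : ℝ} (hx : 0 < x)
    (hd : HasDerivAt f d x) (hf : AntitoneOn f (Ici 0)) : d ≤ 0 := by
  have h := hasDerivAt_iff_tendsto_slope.mp hd
  refine le_of_tendsto h ?_
  have hmem : Ioi (0 : ℝ) ∈ 𝓝 x := Ioi_mem_nhds hx
  filter_upwards [nhdsWithin_le_nhds hmem, self_mem_nhdsWithin] with y hy hy'
  have hy0 : (0 : ℝ) < y := hy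
  have hyx : y ≠ x := hy'
  rw [slope_def_field]
  rcases lt_or_gt_of_ne hyx with hlt | hgt
  · have h1 : f x ≤ f y := hf hy0.le hx.le hlt.le
    apply div_nonpos_of_nonneg_of_nonpos <;> linarith
  · have h1 : f y ≤ f x := hf hx.le hy0.le hgt.le
    apply div_nonpos_of_nonpos_of_nonneg <;> linarith

/-- From superpolynomial decay, an eventual `x ^ (-2)` bound on `x ^ β * u x`. -/
lemma stmt8_decay_bound {u : ℝ → ℝ}
    (hu : ∀ k : ℕ, Tendsto (fun x : ℝ => x ^ k * u x) atTop (𝓝 0)) (β : ℝ) :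
    ∀ᶠ x in atTop, |x ^ β * u x| ≤ x ^ (-2 : ℝ) := by
  set k : ℕ := ⌈β⌉₊ + 2 with hk
  have h1 : ∀ᶠ x in atTop, ‖x ^ k * u x‖ < 1 :=
    (NormedAddCommGroup.tendsto_nhds_zero.mp (hu k)) 1 one_pos
  filter_upwards [h1, eventually_ge_atTop (1 : ℝ)] with x h1 hx1
  have hx0 : (0 : ℝ) < x := lt_of_lt_of_le one_pos hx1
  have hxk : (0 : ℝ) < x ^ k := pow_pos hx0 k
  have hub : |u x| ≤ x ^ (-(k : ℝ)) := by
    rw [Real.rpow_neg hx0.le, Real.rpow_natCast, ← one_div, le_div_iff₀ hxk]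
    have : |x ^ k * u x| ≤ 1 := le_of_lt (by rwa [Real.norm_eq_abs] at h1)
    calc |u x| * x ^ k = |x ^ k * u x| := by
          rw [abs_mul, abs_of_nonneg hxk.le, mul_comm]
      _ ≤ 1 := this
  calc |x ^ β * u x| = x ^ β * |u x| := by
        rw [abs_mul, abs_of_nonneg (Real.rpow_nonneg hx0.le β)]
    _ ≤ x ^ β * x ^ (-(k : ℝ)) := by
        exact mul_le_mul_of_nonneg_left hub (Real.rpow_nonneg hx0.le β)
    _ = x ^ (β - (k : ℝ)) := by rw [← Real.rpow_add hx0]; ring_nf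
    _ ≤ x ^ (-2 : ℝ) := by
        apply Real.rpow_le_rpow_of_exponent_le hx1
        have : β ≤ (⌈β⌉₊ : ℝ) := Nat.le_ceil β
        simp only [hk]
        push_cast
        linarith

/-- Integrability on `Ioi a` from continuity and an eventual `x ^ (-2)` bound. -/
lemma stmt8_integrableOn {h : ℝ → ℝ} {a : ℝ} (ha : 0 < a)
    (hcont : ContinuousOn h (Ici a))
    (hdec : ∀ᶠ x in atTop, |h x| ≤ x ^ (-2 : ℝ)) :
    IntegrableOn h (Ioi a) := by
  obtain ⟨T0, hT0⟩ := eventually_atTop.mp hdec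
  set T : ℝ := max T0 (max a 1) with hT
  have haT : a ≤ T := le_trans (le_max_left a 1) (le_max_right _ _)
  have hT1 : (1 : ℝ) ≤ T := le_trans (le_max_right a 1) (le_max_right _ _)
  have hTpos : (0 : ℝ) < T := lt_of_lt_of_le one_pos hT1
  have i1 : IntegrableOn h (Ioc a T) := by
    have : IntegrableOn h (Icc a T) :=
      (hcont.mono Icc_subset_Ici_self).integrableOn_Icc
    exact this.mono_set Ioc_subset_Icc_self
  have i2 : IntegrableOn h (Ioi T) := by
    have hint : IntegrableOn (fun x : ℝ => x ^ (-2 : ℝ)) (Ioi T) :=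
      integrableOn_Ioi_rpow_of_lt (by norm_num) hTpos
    apply Integrable.mono hint
    · exact (hcont.mono (fun x hx => le_trans haT (le_of_lt hx))).aestronglyMeasurable
        measurableSet_Ioi
    · refine ae_restrict_of_forall_mem measurableSet_Ioi fun x hx => ?_
      have hxT : T ≤ x := le_of_lt hx
      have := hT0 x (le_trans (le_max_left _ _) hxT)
      rw [Real.norm_eq_abs, Real.norm_eq_abs,
        abs_of_nonneg (Real.rpow_nonneg (le_trans hTpos.le hxT) _)]
      exact this
  have : IntegrableOn h (Ioc a T ∪ Ioi T) := i1.union i2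
  rwa [Ioc_union_Ioi_eq_Ioi haT] at this
/-- converse Karamata estimate: let `(λ_j)` be nondecreasing positive with
`N(λ) ∼ C λ^α`, and `f : ℝ⁺ → ℝ⁺` nonincreasing, `C¹`, with `f` and `f'` decaying faster
than any polynomial at infinity. Then for every `ε > 0` there is `K(ε) > 0`, depending on
the counting function but not on `f`, such that
`|Σ f(λ_j) - Cα ∫_{λ₁}^∞ f(λ) λ^(α-1) dλ| ≤ K f(λ₁) + ε ∫_{λ₁}^∞ f(λ) λ^(α-1) dλ`. -/
theorem stmt_8 (lam : ℕ → ℝ) (hpos : ∀ j, 0 < lam j) (hmono : Monotone lam)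
    (C α : ℝ) (hC : 0 < C) (hα : 0 < α)
    (hN : (fun t : ℝ => (Nat.card {j : ℕ | lam j ≤ t} : ℝ))
        ~[atTop] (fun t : ℝ => C * t ^ α)) :
    ∀ ε : ℝ, 0 < ε → ∃ K : ℝ, 0 < K ∧ ∀ f : ℝ → ℝ,
      (∀ x, 0 ≤ f x) → ContDiff ℝ 1 f → AntitoneOn f (Ici 0) →
      (∀ k : ℕ, Tendsto (fun x : ℝ => x ^ k * f x) atTop (𝓝 0)) →
      (∀ k : ℕ, Tendsto (fun x : ℝ => x ^ k * deriv f x) atTop (𝓝 0)) →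
      |(∑' j : ℕ, f (lam j)) - C * α * ∫ t in Ioi (lam 0), f t * t ^ (α - 1)|
        ≤ K * f (lam 0) + ε * ∫ t in Ioi (lam 0), f t * t ^ (α - 1) := by
  have ha : 0 < lam 0 := hpos 0
  set a : ℝ := lam 0 with ha_def
  set Nf : ℝ → ℝ := fun t => (Nat.card {j : ℕ | lam j ≤ t} : ℝ) with hNf_def
  have hNf0 : ∀ t, 0 ≤ Nf t := fun t => by simp only [hNf_def]; positivity
  -- finiteness of the counting sets
  have hfin : ∀ t : ℝ, {j : ℕ | lam j ≤ t}.Finite := by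
    intro t
    have hlo := isLittleO_iff.mp hN.isLittleO (c := 1/2) (by norm_num)
    have hposv : ∀ᶠ s in atTop, (0:ℝ) < C * s ^ α := by
      filter_upwards [eventually_ge_atTop (1:ℝ)] with s hs
      exact mul_pos hC (Real.rpow_pos_of_pos (lt_of_lt_of_le one_pos hs) α)
    obtain ⟨s, ⟨hs1, hs2⟩, hs3⟩ := ((hlo.and hposv).and (eventually_ge_atTop t)).exists
    have hNs : (0:ℝ) < Nf s := by
      rw [Real.norm_eq_abs, Real.norm_eq_abs, abs_of_pos hs2, Pi.sub_apply] at hs1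
      have h := (abs_le.mp hs1).1
      linarith
    have hcard : Nat.card {j : ℕ | lam j ≤ s} ≠ 0 := by
      simp only [hNf_def] at hNs
      exact_mod_cast hNs.ne'
    have hfs : {j : ℕ | lam j ≤ s}.Finite :=
      Set.finite_coe_iff.mp (Nat.card_ne_zero.mp hcard).2
    exact hfs.subset fun j hj => le_trans hj hs3
  have hNfmono : Monotone Nf := by
    intro s t hst
    simp only [hNf_def]
    exact_mod_cast Nat.card_mono (hfin t) fun j hj => le_trans hj hst
  have hNfmeas : Measurable Nf := hNfmono.measurable
  intro ε hε
  set ε' : ℝ := ε / (C * α) with hε'_def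
  have hε'pos : 0 < ε' := div_pos hε (mul_pos hC hα)
  obtain ⟨Λ0, hΛ0⟩ := eventually_atTop.mp (isLittleO_iff.mp hN.isLittleO hε'pos)
  set Λ : ℝ := max Λ0 (max (a+1) 1) with hΛ_def
  have hΛa : a < Λ :=
    lt_of_lt_of_le (lt_add_one a) (le_trans (le_max_left _ _) (le_max_right _ _))
  have hΛpos : 0 < Λ :=
    lt_of_lt_of_le one_pos (le_trans (le_max_right _ _) (le_max_right _ _))
  have hΛbound : ∀ t, Λ ≤ t → |Nf t - C * t ^ α| ≤ ε' * (C * t ^ α) := by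
    intro t ht
    have h := hΛ0 t (le_trans (le_max_left _ _) ht)
    have htp : 0 < t := lt_of_lt_of_le hΛpos ht
    rw [Real.norm_eq_abs, Real.norm_eq_abs, Pi.sub_apply,
      abs_of_pos (mul_pos hC (Real.rpow_pos_of_pos htp α))] at h
    exact h
  set M : ℝ := Nf Λ + C * Λ ^ α with hM_def
  have hM0 : 0 ≤ M := by
    have := hNf0 Λ
    have : 0 ≤ C * Λ ^ α := by positivity
    simp only [hM_def]
    linarith [hNf0 Λ]
  have key : ∀ t, a < t → |Nf t - C * t ^ α| ≤ M + ε' * (C * t ^ α) := by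
    intro t ht
    have ht0 : 0 < t := ha.trans ht
    rcases le_or_gt Λ t with h | h
    · have h1 := hΛbound t h
      linarith [hM0]
    · have h2 : Nf t ≤ Nf Λ := hNfmono h.le
      have h3 : C * t ^ α ≤ C * Λ ^ α :=
        mul_le_mul_of_nonneg_left (Real.rpow_le_rpow ht0.le h.le hα.le) hC.le
      have h4 : 0 ≤ ε' * (C * t ^ α) := by positivity
      have h5 : (0:ℝ) ≤ C * t ^ α := by positivity
      have h6 : |Nf t - C * t ^ α| ≤ |Nf t| + |C * t ^ α| := by
        calc |Nf t - C * t ^ α| = |Nf t + -(C * t ^ α)| := by rw [sub_eq_add_neg]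
          _ ≤ |Nf t| + |-(C * t ^ α)| := abs_add_le _ _
          _ = |Nf t| + |C * t ^ α| := by rw [abs_neg]
      rw [abs_of_nonneg (hNf0 t), abs_of_nonneg h5] at h6
      simp only [hM_def]
      linarith
  set K : ℝ := M + ε' * (C * a ^ α) + C * a ^ α + 1 with hK_def
  have hK0 : 0 < K := by
    have h1 : 0 ≤ ε' * (C * a ^ α) := by positivity
    have h2 : (0:ℝ) ≤ C * a ^ α := by positivity
    simp only [hK_def]
    linarith
  refine ⟨K, hK0, ?_⟩
  intro f hf0 hf1 hfanti hdk hdk'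
  have hfdiff : Differentiable ℝ f := hf1.differentiable one_ne_zero
  have hfd : ∀ x, HasDerivAt f (deriv f x) x := fun x => (hfdiff x).hasDerivAt
  set g : ℝ → ℝ := fun t => -deriv f t with hg_def
  have hg_cont : Continuous g := (hf1.continuous_deriv le_rfl).neg
  have hg0 : ∀ x : ℝ, 0 < x → 0 ≤ g x := fun x hx =>
    neg_nonneg.mpr (stmt8_deriv_nonpos hx (hfd x) hfanti)
  have hft : Tendsto f atTop (𝓝 0) := by simpa using hdk 0
  have Ig : ∀ b : ℝ, 0 < b → IntegrableOn g (Ioi b) := by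
    intro b hb
    refine stmt8_integrableOn hb hg_cont.continuousOn ?_
    filter_upwards [stmt8_decay_bound hdk' 0, eventually_gt_atTop (0:ℝ)] with x hx hx0
    rw [Real.rpow_zero, one_mul] at hx
    simpa only [hg_def, abs_neg] using hx
  have hint_g : ∀ b : ℝ, 0 < b → (∫ t in Ioi b, g t) = f b := by
    intro b hb
    have h := integral_Ioi_of_hasDerivAt_of_tendsto (f := fun t => -f t) (f' := g)
      (a := b) (m := 0)
      (hf1.continuous.neg.continuousWithinAt) (fun x _ => (hfd x).neg) (Ig b hb)
      (by simpa using hft.neg)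
    simpa using h
  have hrp : ∀ β : ℝ, ContinuousOn (fun t : ℝ => t ^ β) (Ici a) := fun β x hx =>
    (Real.continuousAt_rpow_const x β (Or.inl (ne_of_gt (lt_of_lt_of_le ha hx)))).continuousWithinAt
  have Iαg : IntegrableOn (fun t => t ^ α * g t) (Ioi a) := by
    refine stmt8_integrableOn ha ((hrp α).mul hg_cont.continuousOn) ?_
    filter_upwards [stmt8_decay_bound hdk' α] with x hx
    calc |x ^ α * g x| = |x ^ α * deriv f x| := by
          simp only [hg_def, mul_neg, abs_neg]
      _ ≤ x ^ (-2:ℝ) := hx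
  have Iα1f : IntegrableOn (fun t => f t * t ^ (α - 1)) (Ioi a) := by
    refine stmt8_integrableOn ha (hf1.continuous.continuousOn.mul (hrp (α-1))) ?_
    filter_upwards [stmt8_decay_bound hdk (α-1)] with x hx
    calc |f x * x ^ (α-1)| = |x ^ (α-1) * f x| := by rw [mul_comm]
      _ ≤ x ^ (-2:ℝ) := hx
  have htendF : Tendsto (fun x : ℝ => x ^ α * f x) atTop (𝓝 0) := by
    refine tendsto_of_tendsto_of_tendsto_of_le_of_le' tendsto_const_nhds (hdk ⌈α⌉₊) ?_ ?_
    · filter_upwards [eventually_ge_atTop (0:ℝ)] with x hx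
      exact mul_nonneg (Real.rpow_nonneg hx α) (hf0 x)
    · filter_upwards [eventually_ge_atTop (1:ℝ)] with x hx
      have h : x ^ α ≤ x ^ ((⌈α⌉₊ : ℕ) : ℝ) :=
        Real.rpow_le_rpow_of_exponent_le hx (Nat.le_ceil α)
      rw [Real.rpow_natCast] at h
      exact mul_le_mul_of_nonneg_right h (hf0 x)
  have hval : (∫ t in Ioi a, (t ^ α * g t - α * (f t * t ^ (α - 1)))) = a ^ α * f a := by
    have h := integral_Ioi_of_hasDerivAt_of_tendsto
      (f := fun t : ℝ => -(t ^ α * f t))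
      (f' := fun t : ℝ => t ^ α * g t - α * (f t * t ^ (α - 1))) (a := a) (m := 0)
      (((Real.continuousAt_rpow_const a α (Or.inl (ne_of_gt ha))).mul
        hf1.continuous.continuousAt).neg.continuousWithinAt)
      (fun x hx => by
        have hx0 : 0 < x := ha.trans hx
        have h1 : HasDerivAt (fun t : ℝ => t ^ α) (α * x ^ (α - 1)) x :=
          Real.hasDerivAt_rpow_const (Or.inl hx0.ne')
        have h2 := (h1.mul (hfd x)).neg
        convert h2 using 1
        · rfl
        simp only [hg_def]
        ring)
      (Iαg.sub (Iα1f.const_mul α)) (by simpa using htendF.neg)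
    simpa using h
  have hI0 : 0 ≤ ∫ t in Ioi a, f t * t ^ (α - 1) :=
    setIntegral_nonneg measurableSet_Ioi fun t ht =>
      mul_nonneg (hf0 t) (Real.rpow_nonneg (le_of_lt (ha.trans ht)) _)
  have hαg_val : (∫ t in Ioi a, t ^ α * g t)
      = a ^ α * f a + α * ∫ t in Ioi a, f t * t ^ (α - 1) := by
    have h := integral_sub Iαg (Iα1f.const_mul α)
    rw [integral_const_mul] at h
    have h2 := hval.symm.trans h
    linarith
  -- Tonelli step
  set G := fun t : ℝ => ENNReal.ofReal (g t) with hG_def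
  have hGmeas : Measurable G := hg_cont.measurable.ennreal_ofReal
  have h1 : ∀ j : ℕ, (∫⁻ t, (Ioi (lam j)).indicator G t ∂(volume.restrict (Ioi a)))
      = ENNReal.ofReal (f (lam j)) := by
    intro j
    rw [lintegral_indicator measurableSet_Ioi, Measure.restrict_restrict measurableSet_Ioi,
      Ioi_inter_Ioi, sup_eq_left.mpr (show a ≤ lam j from ha_def ▸ hmono (Nat.zero_le j))]
    rw [← ofReal_integral_eq_lintegral_ofReal (Ig (lam j) (hpos j))
      (ae_restrict_of_forall_mem measurableSet_Ioi fun x hx => hg0 x ((hpos j).trans hx))]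
    rw [hint_g (lam j) (hpos j)]
  have hInt_Ng : IntegrableOn (fun t => Nf t * g t) (Ioi a) := by
    have hmeas : AEStronglyMeasurable (fun t => Nf t * g t) (volume.restrict (Ioi a)) :=
      ((hNfmeas.mul hg_cont.measurable)).aestronglyMeasurable
    have hbd : IntegrableOn (fun t => M * g t + ((1 + ε') * C) * (t ^ α * g t)) (Ioi a) :=
      ((Ig a ha).const_mul M).add (Iαg.const_mul _)
    refine Integrable.mono hbd hmeas ?_
    refine ae_restrict_of_forall_mem measurableSet_Ioi fun t ht => ?_
    have ht0 : 0 < t := ha.trans ht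
    have hgt := hg0 t ht0
    have hk := key t ht
    have hca : (0:ℝ) ≤ C * t ^ α := by positivity
    have hNle : Nf t ≤ M + (1 + ε') * (C * t ^ α) := by
      have h := (abs_le.mp hk).2
      linarith
    rw [Real.norm_eq_abs, Real.norm_eq_abs, abs_of_nonneg (mul_nonneg (hNf0 t) hgt),
      abs_of_nonneg (add_nonneg (mul_nonneg hM0 hgt)
        (mul_nonneg (mul_nonneg (by linarith : (0:ℝ) ≤ 1 + ε') hC.le)
          (mul_nonneg (Real.rpow_nonneg ht0.le α) hgt)) :
        (0:ℝ) ≤ M * g t + ((1 + ε') * C) * (t ^ α * g t))]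
    calc Nf t * g t ≤ (M + (1 + ε') * (C * t ^ α)) * g t :=
          mul_le_mul_of_nonneg_right hNle hgt
      _ = M * g t + ((1 + ε') * C) * (t ^ α * g t) := by ring
  have hnonnegae : 0 ≤ᵐ[volume.restrict (Ioi a)] fun t => Nf t * g t :=
    ae_restrict_of_forall_mem measurableSet_Ioi fun t ht =>
      mul_nonneg (hNf0 t) (hg0 t (ha.trans ht))
  have hnull : (volume.restrict (Ioi a)) (range lam) = 0 := by
    rw [Measure.restrict_apply ((countable_range lam).measurableSet)]
    exact measure_mono_null inter_subset_left ((countable_range lam).measure_zero _)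
  have hmid : (∫⁻ t, ∑' j : ℕ, (Ioi (lam j)).indicator G t ∂(volume.restrict (Ioi a)))
      = ∫⁻ t, ENNReal.ofReal (Nf t * g t) ∂(volume.restrict (Ioi a)) := by
    refine lintegral_congr_ae ?_
    filter_upwards [measure_eq_zero_iff_ae_notMem.mp hnull] with t htr
    have hS : {j : ℕ | lam j ≤ t}.Finite := hfin t
    have hts : (∑' j : ℕ, (Ioi (lam j)).indicator G t)
        = ∑ j ∈ hS.toFinset, (Ioi (lam j)).indicator G t := by
      refine tsum_eq_sum fun j hj => ?_
      exact Set.indicator_of_notMem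
        (fun hmem => hj (hS.mem_toFinset.mpr (le_of_lt hmem))) _
    have hsum : (∑ j ∈ hS.toFinset, (Ioi (lam j)).indicator G t)
        = (hS.toFinset.card : ENNReal) * G t := by
      rw [Finset.sum_congr rfl (fun j hj => Set.indicator_of_mem
        (show t ∈ Ioi (lam j) from
          lt_of_le_of_ne (hS.mem_toFinset.mp hj) (fun he => htr ⟨j, he⟩)) G),
        Finset.sum_const, nsmul_eq_mul]
    have hcard : (hS.toFinset.card : ℝ) = Nf t := by
      simp only [hNf_def]
      norm_cast
      rw [Nat.card_coe_set_eq, Set.ncard_eq_toFinset_card _ hS]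
    rw [hts, hsum, ENNReal.ofReal_mul (hNf0 t), ← hcard, ENNReal.ofReal_natCast]
  have hNg0 : 0 ≤ ∫ t in Ioi a, Nf t * g t :=
    setIntegral_nonneg measurableSet_Ioi fun t ht =>
      mul_nonneg (hNf0 t) (hg0 t (ha.trans ht))
  have hchain : (∑' j : ℕ, ENNReal.ofReal (f (lam j)))
      = ENNReal.ofReal (∫ t in Ioi a, Nf t * g t) := by
    calc (∑' j : ℕ, ENNReal.ofReal (f (lam j)))
        = ∑' j : ℕ, ∫⁻ t, (Ioi (lam j)).indicator G t ∂(volume.restrict (Ioi a)) :=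
          (tsum_congr h1).symm
      _ = ∫⁻ t, ∑' j : ℕ, (Ioi (lam j)).indicator G t ∂(volume.restrict (Ioi a)) :=
          (lintegral_tsum fun j => (hGmeas.indicator measurableSet_Ioi).aemeasurable).symm
      _ = ∫⁻ t, ENNReal.ofReal (Nf t * g t) ∂(volume.restrict (Ioi a)) := hmid
      _ = ENNReal.ofReal (∫ t in Ioi a, Nf t * g t) :=
          (ofReal_integral_eq_lintegral_ofReal hInt_Ng hnonnegae).symm
  have hsum_eq : (∑' j : ℕ, f (lam j)) = ∫ t in Ioi a, Nf t * g t := by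
    have h5 : (∑' j : ℕ, ENNReal.ofReal (f (lam j))).toReal = ∑' j : ℕ, f (lam j) := by
      rw [ENNReal.tsum_toReal_eq fun _ => ENNReal.ofReal_ne_top]
      exact tsum_congr fun j => ENNReal.toReal_ofReal (hf0 _)
    rw [← h5, hchain, ENNReal.toReal_ofReal hNg0]
  -- final assembly
  set I : ℝ := ∫ t in Ioi a, f t * t ^ (α - 1) with hI_def
  have hdiff : (∑' j : ℕ, f (lam j)) - C * α * I
      = (∫ t in Ioi a, (Nf t - C * t ^ α) * g t) + C * (a ^ α * f a) := by
    have hsub : (∫ t in Ioi a, (Nf t - C * t ^ α) * g t)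
        = (∫ t in Ioi a, Nf t * g t) - C * ∫ t in Ioi a, t ^ α * g t := by
      have h := integral_sub hInt_Ng (Iαg.const_mul C)
      rw [integral_const_mul] at h
      rw [← h]
      exact integral_congr_ae (ae_of_all _ fun t => by ring)
    rw [hsum_eq, hsub, hαg_val]
    ring
  have hIsub : IntegrableOn (fun t => (Nf t - C * t ^ α) * g t) (Ioi a) := by
    have h := hInt_Ng.sub (Iαg.const_mul C)
    exact h.congr (ae_of_all _ fun t => by
      simp only [Pi.sub_apply, hg_def]; ring)
  have hIbd : IntegrableOn (fun t => (M + ε' * (C * t ^ α)) * g t) (Ioi a) := by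
    have h := ((Ig a ha).const_mul M).add (Iαg.const_mul (ε' * C))
    exact h.congr (ae_of_all _ fun t => by
      simp only [Pi.add_apply, hg_def]; ring)
  have h6 : |∫ t in Ioi a, (Nf t - C * t ^ α) * g t|
      ≤ ∫ t in Ioi a, |(Nf t - C * t ^ α) * g t| := by
    have h := norm_integral_le_integral_norm (μ := volume.restrict (Ioi a))
      (fun t => (Nf t - C * t ^ α) * g t)
    simp only [Real.norm_eq_abs] at h
    exact h
  have h7 : (∫ t in Ioi a, |(Nf t - C * t ^ α) * g t|)
      ≤ ∫ t in Ioi a, (M + ε' * (C * t ^ α)) * g t := by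
    refine setIntegral_mono_on hIsub.abs hIbd measurableSet_Ioi fun t ht => ?_
    have ht0 : 0 < t := ha.trans ht
    have hgt := hg0 t ht0
    rw [abs_mul, abs_of_nonneg hgt]
    exact mul_le_mul_of_nonneg_right (key t ht) hgt
  have h8 : (∫ t in Ioi a, (M + ε' * (C * t ^ α)) * g t)
      = M * f a + (ε' * C) * (a ^ α * f a + α * I) := by
    have hadd := integral_add ((Ig a ha).const_mul M) (Iαg.const_mul (ε' * C))
    calc (∫ t in Ioi a, (M + ε' * (C * t ^ α)) * g t)
        = ∫ t in Ioi a, (M * g t + (ε' * C) * (t ^ α * g t)) :=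
          integral_congr_ae (ae_of_all _ fun t => by ring)
      _ = M * (∫ t in Ioi a, g t) + (ε' * C) * ∫ t in Ioi a, t ^ α * g t := by
          rw [hadd, integral_const_mul, integral_const_mul]
      _ = M * f a + (ε' * C) * (a ^ α * f a + α * I) := by
          rw [hint_g a ha, hαg_val]
  have hach : ε' * C * α = ε := by
    rw [hε'_def]
    field_simp
  have hfa0 : 0 ≤ f a := hf0 a
  have hCa0 : (0:ℝ) ≤ C * (a ^ α * f a) := by positivity
  calc |(∑' j : ℕ, f (lam j)) - C * α * I|
      = |(∫ t in Ioi a, (Nf t - C * t ^ α) * g t) + C * (a ^ α * f a)| := by rw [hdiff]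
    _ ≤ |∫ t in Ioi a, (Nf t - C * t ^ α) * g t| + C * (a ^ α * f a) := by
        calc |(∫ t in Ioi a, (Nf t - C * t ^ α) * g t) + C * (a ^ α * f a)|
            ≤ |∫ t in Ioi a, (Nf t - C * t ^ α) * g t| + |C * (a ^ α * f a)| := abs_add_le _ _
          _ = |∫ t in Ioi a, (Nf t - C * t ^ α) * g t| + C * (a ^ α * f a) := by
              rw [abs_of_nonneg hCa0]
    _ ≤ M * f a + (ε' * C) * (a ^ α * f a + α * I) + C * (a ^ α * f a) := by
        have := h6.trans (h7.trans_eq h8)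
        linarith
    _ ≤ K * f a + ε * I := by
        have hexp : M * f a + (ε' * C) * (a ^ α * f a + α * I) + C * (a ^ α * f a)
            = (M + ε' * (C * a ^ α) + C * a ^ α) * f a + (ε' * C * α) * I := by ring
        have hKf : K * f a = (M + ε' * (C * a ^ α) + C * a ^ α) * f a + f a := by
          simp only [hK_def]; ring
        rw [hexp, hach, hKf]
        linarith
end

section
/- Karamata tauberian theorem: let μ be a positive Radon measure on [0,∞) such that ∫₀^∞ e^(−tλ) dμ(λ) ∼ A t^(−α) as t → 0⁺ for some A, α > 0. Then μ([0,λ]) ∼ (A/Γ(α+1)) λ^α as λ → ∞. -/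
open Real Set Filter Asymptotics MeasureTheory Topology Polynomial

noncomputable def kS (α : ℝ) (p : ℝ[X]) : ℝ :=
  ∑ j ∈ Finset.range (p.natDegree + 1), p.coeff j * ((j : ℝ) + 1) ^ (-α)

lemma kG_int {α r : ℝ} (hα : 0 < α) (hr : 0 < r) :
    IntegrableOn (fun u : ℝ => Real.exp (-(r * u)) * u ^ (α - 1)) (Ioi 0) := by
  have := integrableOn_rpow_mul_exp_neg_mul_rpow (p := 1) (s := α - 1) (b := r)
    (by linarith) zero_lt_one hr
  refine this.congr_fun (fun u hu => ?_) measurableSet_Ioi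
  beta_reduce; rw [Real.rpow_one]; ring

lemma kG_val {α r : ℝ} (hα : 0 < α) (hr : 0 < r) :
    ∫ u in Ioi 0, Real.exp (-(r * u)) * u ^ (α - 1) = r ^ (-α) * Real.Gamma α := by
  have := integral_rpow_mul_exp_neg_mul_Ioi hα hr
  rw [show (fun u : ℝ => Real.exp (-(r * u)) * u ^ (α - 1)) = fun u : ℝ => u ^ (α-1) * Real.exp (-(r*u)) by ext u; ring]
  rw [this, one_div, Real.rpow_neg hr.le, Real.inv_rpow hr.le]

-- comment removed

-- pointwise expansion
lemma kexpand (p : ℝ[X]) (t lam : ℝ) :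
    Real.exp (-t * lam) * p.eval (Real.exp (-t * lam))
      = ∑ j ∈ Finset.range (p.natDegree + 1),
          p.coeff j * Real.exp (-(((j : ℝ) + 1) * t) * lam) := by
  rw [Polynomial.eval_eq_sum_range, Finset.mul_sum]
  refine Finset.sum_congr rfl fun j _ => ?_
  rw [← Real.exp_nat_mul]
  rw [show (-(((j : ℝ) + 1) * t) * lam) = -t*lam + (j:ℝ) * (-t*lam) by ring, Real.exp_add]
  ring

lemma kint_poly {α : ℝ} (hα : 0 < α) (p : ℝ[X]) :
    IntegrableOn (fun u : ℝ => Real.exp (-u) * p.eval (Real.exp (-u)) * u ^ (α - 1)) (Ioi 0) := by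
  have : (fun u : ℝ => Real.exp (-u) * p.eval (Real.exp (-u)) * u ^ (α - 1))
      = fun u => ∑ j ∈ Finset.range (p.natDegree + 1),
          p.coeff j * (Real.exp (-(((j : ℝ) + 1) * u)) * u ^ (α - 1)) := by
    ext u
    have := kexpand p 1 u
    simp only [neg_one_mul, mul_one] at this ⊢
    rw [show (-u : ℝ) = -1 * u by ring] at this ⊢
    rw [this, Finset.sum_mul]
    refine Finset.sum_congr rfl fun j _ => ?_
    ring_nf
  rw [this]
  exact integrable_finset_sum _ fun j _ =>
    ((kG_int hα (by positivity : (0:ℝ) < (j:ℝ)+1)).const_mul _)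

lemma kS_eq_integral {α : ℝ} (hα : 0 < α) (p : ℝ[X]) :
    Real.Gamma α * kS α p
      = ∫ u in Ioi 0, Real.exp (-u) * p.eval (Real.exp (-u)) * u ^ (α - 1) := by
  have hpt : ∀ u : ℝ, Real.exp (-u) * p.eval (Real.exp (-u)) * u ^ (α - 1)
      = ∑ j ∈ Finset.range (p.natDegree + 1),
          p.coeff j * (Real.exp (-(((j : ℝ) + 1) * u)) * u ^ (α - 1)) := by
    intro u
    have := kexpand p 1 u
    simp only [mul_one] at this
    rw [show (-u : ℝ) = -1 * u by ring, this, Finset.sum_mul]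
    refine Finset.sum_congr rfl fun j _ => ?_
    ring_nf
  simp_rw [hpt]
  have hi := integral_finset_sum (μ := volume.restrict (Ioi 0))
    (Finset.range (p.natDegree + 1))
    (f := fun j u => p.coeff j * (Real.exp (-(((j : ℝ) + 1) * u)) * u ^ (α - 1)))
    (fun j _ => ((kG_int hα (by positivity : (0:ℝ) < (j:ℝ)+1)).const_mul _))
  rw [hi, kS, Finset.mul_sum]
  refine Finset.sum_congr rfl fun j _ => ?_
  rw [integral_const_mul, kG_val hα (by positivity : (0:ℝ) < (j:ℝ)+1)]
  ring

lemma kE_int {α : ℝ} (hα : 0 < α) :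
    IntegrableOn (fun u : ℝ => Real.exp (-u) * u ^ (α - 1)) (Ioi 0) := by
  have := kG_int hα one_pos
  simpa using this

lemma kE_val {α : ℝ} (hα : 0 < α) :
    ∫ u in Ioi 0, Real.exp (-u) * u ^ (α - 1) = Real.Gamma α := by
  have := kG_val hα one_pos
  simpa using this

lemma kI_int {α c : ℝ} (hα : 0 < α) (hc : 0 ≤ c) :
    Integrable ((Ioc (0:ℝ) c).indicator (fun u => u ^ (α - 1)))
      (volume.restrict (Ioi 0)) := by
  rw [integrable_indicator_iff measurableSet_Ioc]
  rw [IntegrableOn, Measure.restrict_restrict measurableSet_Ioc,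
    inter_eq_left.2 Ioc_subset_Ioi_self]
  have h := intervalIntegral.intervalIntegrable_rpow' (a := 0) (b := c) (r := α - 1) (by linarith)
  rw [intervalIntegrable_iff, uIoc_of_le hc] at h
  exact h

lemma kI_val {α c : ℝ} (hα : 0 < α) (hc : 0 ≤ c) :
    ∫ u in Ioi (0:ℝ), (Ioc (0:ℝ) c).indicator (fun u => u ^ (α - 1)) u
      = c ^ α / α := by
  rw [integral_indicator measurableSet_Ioc,
    Measure.restrict_restrict measurableSet_Ioc,
    inter_eq_left.2 Ioc_subset_Ioi_self]
  rw [← intervalIntegral.integral_of_le hc]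
  rw [integral_rpow (Or.inl (by linarith))]
  rw [sub_add_cancel, Real.zero_rpow hα.ne']
  ring

lemma kS_le {α : ℝ} (hα : 0 < α) (p : ℝ[X]) {c ε₁ : ℝ} (hc : 0 ≤ c) (hε₁ : 0 ≤ ε₁)
    (hbd : ∀ u : ℝ, 0 < u → Real.exp (-u) * p.eval (Real.exp (-u))
      ≤ (if u ≤ c then 1 else 0) + 2 * ε₁ * Real.exp (-u)) :
    Real.Gamma α * kS α p ≤ c ^ α / α + 2 * ε₁ * Real.Gamma α := by
  rw [kS_eq_integral hα]
  have hg : Integrable (fun u : ℝ => (Ioc (0:ℝ) c).indicator (fun u => u ^ (α-1)) u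
      + 2 * ε₁ * (Real.exp (-u) * u ^ (α - 1))) (volume.restrict (Ioi 0)) :=
    (kI_int hα hc).add ((kE_int hα).const_mul _)
  have hmono : ∫ u in Ioi (0:ℝ), Real.exp (-u) * p.eval (Real.exp (-u)) * u ^ (α - 1)
      ≤ ∫ u in Ioi (0:ℝ), ((Ioc (0:ℝ) c).indicator (fun u => u ^ (α-1)) u
        + 2 * ε₁ * (Real.exp (-u) * u ^ (α - 1))) := by
    apply setIntegral_mono_on (kint_poly hα p) hg measurableSet_Ioi
    intro u hu
    have hu' : (0:ℝ) < u := hu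
    have h1 : (Ioc (0:ℝ) c).indicator (fun u => u ^ (α-1)) u
        = (if u ≤ c then 1 else 0) * u ^ (α - 1) := by
      rw [Set.indicator_apply]
      by_cases h : u ≤ c
      · rw [if_pos h, if_pos ⟨hu', h⟩, one_mul]
      · rw [if_neg h, if_neg (fun hh => h hh.2), zero_mul]
    rw [h1]
    have := mul_le_mul_of_nonneg_right (hbd u hu')
      (Real.rpow_nonneg hu'.le (α - 1))
    calc Real.exp (-u) * p.eval (Real.exp (-u)) * u ^ (α - 1)
        ≤ ((if u ≤ c then 1 else 0) + 2 * ε₁ * Real.exp (-u)) * u ^ (α - 1) := this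
      _ = (if u ≤ c then 1 else 0) * u ^ (α-1) + 2 * ε₁ * (Real.exp (-u) * u ^ (α-1)) := by
          ring
  calc (∫ u in Ioi (0:ℝ), Real.exp (-u) * p.eval (Real.exp (-u)) * u ^ (α - 1))
      ≤ _ := hmono
    _ = c ^ α / α + 2 * ε₁ * Real.Gamma α := by
        rw [integral_add (kI_int hα hc) ((kE_int hα).const_mul _),
          integral_const_mul, kI_val hα hc, kE_val hα]

lemma kS_ge {α : ℝ} (hα : 0 < α) (p : ℝ[X]) {c ε₁ : ℝ} (hc : 0 ≤ c) (hε₁ : 0 ≤ ε₁)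
    (hbd : ∀ u : ℝ, 0 < u → (if u ≤ c then 1 else 0) - 2 * ε₁ * Real.exp (-u)
      ≤ Real.exp (-u) * p.eval (Real.exp (-u))) :
    c ^ α / α - 2 * ε₁ * Real.Gamma α ≤ Real.Gamma α * kS α p := by
  rw [kS_eq_integral hα]
  have hg : Integrable (fun u : ℝ => (Ioc (0:ℝ) c).indicator (fun u => u ^ (α-1)) u
      - 2 * ε₁ * (Real.exp (-u) * u ^ (α - 1))) (volume.restrict (Ioi 0)) :=
    (kI_int hα hc).sub ((kE_int hα).const_mul _)
  have hmono : (∫ u in Ioi (0:ℝ), ((Ioc (0:ℝ) c).indicator (fun u => u ^ (α-1)) u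
        - 2 * ε₁ * (Real.exp (-u) * u ^ (α - 1))))
      ≤ ∫ u in Ioi (0:ℝ), Real.exp (-u) * p.eval (Real.exp (-u)) * u ^ (α - 1) := by
    apply setIntegral_mono_on hg (kint_poly hα p) measurableSet_Ioi
    intro u hu
    have hu' : (0:ℝ) < u := hu
    have h1 : (Ioc (0:ℝ) c).indicator (fun u => u ^ (α-1)) u
        = (if u ≤ c then 1 else 0) * u ^ (α - 1) := by
      rw [Set.indicator_apply]
      by_cases h : u ≤ c
      · rw [if_pos h, if_pos ⟨hu', h⟩, one_mul]
      · rw [if_neg h, if_neg (fun hh => h hh.2), zero_mul]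
    rw [h1]
    have := mul_le_mul_of_nonneg_right (hbd u hu')
      (Real.rpow_nonneg hu'.le (α - 1))
    calc (if u ≤ c then 1 else 0) * u ^ (α-1) - 2 * ε₁ * (Real.exp (-u) * u ^ (α-1))
        = ((if u ≤ c then 1 else 0) - 2 * ε₁ * Real.exp (-u)) * u ^ (α - 1) := by ring
      _ ≤ Real.exp (-u) * p.eval (Real.exp (-u)) * u ^ (α - 1) := this
  calc c ^ α / α - 2 * ε₁ * Real.Gamma α
      = ∫ u in Ioi (0:ℝ), ((Ioc (0:ℝ) c).indicator (fun u => u ^ (α-1)) u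
          - 2 * ε₁ * (Real.exp (-u) * u ^ (α - 1))) := by
        rw [integral_sub (kI_int hα hc) ((kE_int hα).const_mul _),
          integral_const_mul, kI_val hα hc, kE_val hα]
    _ ≤ _ := hmono

noncomputable def kH (a δ : ℝ) (x : ℝ) : ℝ :=
  min (max 0 ((Real.exp 1 / δ) * (x - a))) x⁻¹

lemma kH_nonneg {a δ x : ℝ} (hx : 0 ≤ x) : 0 ≤ kH a δ x :=
  le_min (le_max_left _ _) (inv_nonneg.2 hx)

lemma kH_mul_le_one {a δ x : ℝ} (hx : 0 ≤ x) : x * kH a δ x ≤ 1 := by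
  calc x * kH a δ x ≤ x * x⁻¹ := by
        apply mul_le_mul_of_nonneg_left (min_le_right _ _) hx
    _ ≤ 1 := by
        rcases eq_or_lt_of_le hx with h | h
        · simp [← h]
        · rw [mul_inv_cancel₀ h.ne']

lemma kH_eq_zero {a δ x : ℝ} (hδ : 0 < δ) (hx : 0 ≤ x) (hxa : x ≤ a) :
    kH a δ x = 0 := by
  have h1 : Real.exp 1 / δ * (x - a) ≤ 0 :=
    mul_nonpos_of_nonneg_of_nonpos (by positivity) (by linarith)
  rw [kH, max_eq_left h1, min_eq_left (inv_nonneg.2 hx)]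

lemma kH_eq_inv {a δ x : ℝ} (hδ : 0 < δ) (hx : a + δ ≤ x)
    (hex : Real.exp (-1) ≤ x) : kH a δ x = x⁻¹ := by
  have hx0 : 0 < x := lt_of_lt_of_le (Real.exp_pos _) hex
  have h2 : x⁻¹ ≤ Real.exp 1 := by
    rw [Real.exp_neg] at hex
    calc x⁻¹ ≤ ((Real.exp 1)⁻¹)⁻¹ :=
          inv_anti₀ (by positivity) hex
      _ = Real.exp 1 := inv_inv _
  have h3 : Real.exp 1 ≤ Real.exp 1 / δ * (x - a) := by
    rw [div_mul_eq_mul_div, le_div_iff₀ hδ]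
    nlinarith [Real.exp_pos 1]
  rw [kH, min_eq_right]
  exact le_max_of_le_right (h2.trans h3)

lemma kH_contOn {a δ : ℝ} (ha : 0 < a) (hδ : 0 < δ) :
    ContinuousOn (kH a δ) (Icc 0 1) := by
  intro x hx
  rcases eq_or_lt_of_le hx.1 with rfl | h0
  · have hev : (fun y => kH a δ y) =ᶠ[𝓝[Icc (0:ℝ) 1] (0:ℝ)] fun _ => (0:ℝ) := by
      have hmem : Iio a ∈ 𝓝[Icc (0:ℝ) 1] (0:ℝ) :=
        nhdsWithin_le_nhds (Iio_mem_nhds ha)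
      filter_upwards [hmem, self_mem_nhdsWithin] with y hy1 hy2
      exact kH_eq_zero hδ hy2.1 (le_of_lt hy1)
    exact continuousWithinAt_const.congr_of_eventuallyEq hev
      (kH_eq_zero hδ le_rfl ha.le)
  · have h1 : Tendsto (fun y : ℝ => max 0 (Real.exp 1 / δ * (y - a))) (𝓝 x)
        (𝓝 (max 0 (Real.exp 1 / δ * (x - a)))) :=
      ((continuous_const.max
        (continuous_const.mul (continuous_id.sub continuous_const))).tendsto x)
    have h2 : Tendsto (fun y : ℝ => y⁻¹) (𝓝 x) (𝓝 x⁻¹) := continuousAt_inv₀ h0.ne'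
    have : ContinuousAt (kH a δ) x := h1.min h2
    exact this.continuousWithinAt

lemma kdelta {α A ε : ℝ} (hα : 0 < α) (hA : 0 < A) (hε : 0 < ε) (s : ℝ) (hs : s = 1 ∨ s = -1) :
    ∃ δ : ℝ, 0 < δ ∧ δ < Real.exp (-1) ∧ Real.exp (-1) + δ < 1 ∧
      |A * ((-Real.log (Real.exp (-1) + s * δ)) ^ α - 1) / Real.Gamma (α + 1)| < ε / 2 := by
  have he1 : (0:ℝ) < Real.exp (-1) := Real.exp_pos _
  have hcont : Tendsto (fun δ : ℝ =>
      A * ((-Real.log (Real.exp (-1) + s * δ)) ^ α - 1) / Real.Gamma (α + 1))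
      (𝓝 0) (𝓝 0) := by
    have h1 : ContinuousAt (fun δ : ℝ => -Real.log (Real.exp (-1) + s * δ)) 0 := by
      apply ContinuousAt.neg
      apply Real.continuousAt_log ?_ |>.comp
      · exact (continuous_const.add (continuous_const.mul continuous_id)).continuousAt
      · simp [he1.ne']
    have h2 : ContinuousAt (fun δ : ℝ =>
        A * ((-Real.log (Real.exp (-1) + s * δ)) ^ α - 1) / Real.Gamma (α + 1)) 0 := by
      apply ContinuousAt.div_const
      apply ContinuousAt.mul continuousAt_const
      apply ContinuousAt.sub ?_ continuousAt_const
      apply ContinuousAt.rpow_const h1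
      left
      simp [Real.log_exp]
    have h6 := h2.tendsto
    simp only [mul_zero, add_zero, Real.log_exp, neg_neg, Real.one_rpow, sub_self,
      zero_div] at h6
    exact h6
  have h3 : ∀ᶠ δ : ℝ in 𝓝[>] 0,
      |A * ((-Real.log (Real.exp (-1) + s * δ)) ^ α - 1) / Real.Gamma (α + 1)| < ε / 2 := by
    have hm : Tendsto (fun δ : ℝ =>
        A * ((-Real.log (Real.exp (-1) + s * δ)) ^ α - 1) / Real.Gamma (α + 1))
        (𝓝[>] (0:ℝ)) (𝓝 0) := hcont.mono_left nhdsWithin_le_nhds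
    have h4 := hm.eventually (eventually_abs_sub_lt 0 (half_pos hε))
    simpa using h4
  have h5 : ∀ᶠ δ : ℝ in 𝓝[>] (0:ℝ), δ < Real.exp (-1) := by
    apply eventually_nhdsWithin_of_eventually_nhds
    exact Filter.Tendsto.eventually_lt_const he1 tendsto_id
  have h6 : ∀ᶠ δ : ℝ in 𝓝[>] (0:ℝ), Real.exp (-1) + δ < 1 := by
    apply eventually_nhdsWithin_of_eventually_nhds
    have hlt : Real.exp (-1) + 0 < 1 := by
      rw [add_zero]
      exact Real.exp_lt_one_iff.2 (by norm_num)
    exact Filter.Tendsto.eventually_lt_const hlt (tendsto_const_nhds.add tendsto_id)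
  obtain ⟨δ, hδ1, hδ2, hδ3, hδ0⟩ := (h5.and (h6.and (h3.and self_mem_nhdsWithin))).exists
  exact ⟨δ, hδ0, hδ1, hδ2, hδ3⟩

lemma kupper {A α : ℝ} (hA : 0 < A) (hα : 0 < α) {ε : ℝ} (hε : 0 < ε) :
    ∃ p : ℝ[X], (∀ x ∈ Icc (0:ℝ) 1, 0 ≤ x * p.eval x) ∧
      (∀ x ∈ Icc (Real.exp (-1)) 1, 1 ≤ x * p.eval x) ∧
      A * kS α p ≤ A / Real.Gamma (α + 1) + ε := by
  obtain ⟨δ, hδ0, hδ1, hδ2, hδ3⟩ := kdelta hα hA hε (-1) (Or.inr rfl)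
  set a : ℝ := Real.exp (-1) - δ with ha_def
  have ha : 0 < a := by simp only [ha_def]; linarith
  set c : ℝ := -Real.log a with hc_def
  have hexpc : Real.exp (-c) = a := by
    rw [hc_def, neg_neg, Real.exp_log ha]
  have ha1 : a ≤ 1 := by
    have := Real.exp_lt_one_iff.2 (show (-1:ℝ) < 0 by norm_num)
    simp only [ha_def]; linarith
  have hc0 : 0 ≤ c := by
    rw [hc_def]
    simp only [neg_nonneg]
    exact Real.log_nonpos ha.le ha1
  set ε₁ : ℝ := ε / (8 * A) with hε₁_def
  have hε₁ : 0 < ε₁ := by positivity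
  obtain ⟨q, hq⟩ := exists_polynomial_near_of_continuousOn 0 1 (kH a δ)
    (kH_contOn ha hδ0) ε₁ hε₁
  refine ⟨q + Polynomial.C ε₁, ?_, ?_, ?_⟩
  · intro x hx
    have h1 := abs_lt.1 (hq x hx)
    have h2 : kH a δ x ≤ (q + Polynomial.C ε₁).eval x := by
      simp only [Polynomial.eval_add, Polynomial.eval_C]
      linarith [h1.1]
    exact mul_nonneg hx.1 ((kH_nonneg hx.1).trans h2)
  · intro x hx
    have hx0 : 0 < x := lt_of_lt_of_le (Real.exp_pos _) hx.1
    have hxIcc : x ∈ Icc (0:ℝ) 1 := ⟨hx0.le, hx.2⟩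
    have h1 := abs_lt.1 (hq x hxIcc)
    have hHx : kH a δ x = x⁻¹ :=
      kH_eq_inv hδ0 (by simp only [ha_def]; linarith [hx.1]) hx.1
    have h2 : x⁻¹ ≤ (q + Polynomial.C ε₁).eval x := by
      simp only [Polynomial.eval_add, Polynomial.eval_C]
      rw [← hHx]; linarith [h1.1]
    calc (1:ℝ) = x * x⁻¹ := (mul_inv_cancel₀ hx0.ne').symm
      _ ≤ x * (q + Polynomial.C ε₁).eval x := mul_le_mul_of_nonneg_left h2 hx0.le
  · have hbd : ∀ u : ℝ, 0 < u →
        Real.exp (-u) * (q + Polynomial.C ε₁).eval (Real.exp (-u))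
          ≤ (if u ≤ c then 1 else 0) + 2 * ε₁ * Real.exp (-u) := by
      intro u hu
      set x : ℝ := Real.exp (-u) with hx_def
      have hx0 : 0 < x := Real.exp_pos _
      have hx1 : x ≤ 1 := Real.exp_le_one_iff.2 (by linarith)
      have h1 := abs_lt.1 (hq x ⟨hx0.le, hx1⟩)
      have h2 : (q + Polynomial.C ε₁).eval x ≤ kH a δ x + 2 * ε₁ := by
        simp only [Polynomial.eval_add, Polynomial.eval_C]
        linarith [h1.2]
      have h3 : x * (q + Polynomial.C ε₁).eval x ≤ x * kH a δ x + 2 * ε₁ * x := by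
        calc x * (q + Polynomial.C ε₁).eval x ≤ x * (kH a δ x + 2 * ε₁) :=
              mul_le_mul_of_nonneg_left h2 hx0.le
          _ = x * kH a δ x + 2 * ε₁ * x := by ring
      by_cases hcase : u ≤ c
      · rw [if_pos hcase]
        calc x * (q + Polynomial.C ε₁).eval x ≤ x * kH a δ x + 2 * ε₁ * x := h3
          _ ≤ 1 + 2 * ε₁ * x := by linarith [kH_mul_le_one (a := a) (δ := δ) hx0.le]
      · rw [if_neg hcase]
        push_neg at hcase
        have hxa : x ≤ a := by
          rw [← hexpc, hx_def]
          exact Real.exp_le_exp.2 (by linarith)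
        have hH0 : kH a δ x = 0 := kH_eq_zero hδ0 hx0.le hxa
        rw [hH0, mul_zero, zero_add] at h3
        linarith
    have h4 := kS_le hα (q + Polynomial.C ε₁) hc0 hε₁.le hbd
    have hΓpos : 0 < Real.Gamma α := Real.Gamma_pos_of_pos hα
    have hΓ1pos : 0 < Real.Gamma (α + 1) := Real.Gamma_pos_of_pos (by linarith)
    have h5 : A * kS α (q + Polynomial.C ε₁)
        ≤ A / Real.Gamma α * (c ^ α / α + 2 * ε₁ * Real.Gamma α) := by
      have hm := mul_le_mul_of_nonneg_left h4 (le_of_lt (div_pos hA hΓpos))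
      calc A * kS α (q + Polynomial.C ε₁)
          = A / Real.Gamma α * (Real.Gamma α * kS α (q + Polynomial.C ε₁)) := by
            field_simp
        _ ≤ _ := hm
    have hΓadd : Real.Gamma (α + 1) = α * Real.Gamma α := Real.Gamma_add_one hα.ne'
    have h6 : A / Real.Gamma α * (c ^ α / α + 2 * ε₁ * Real.Gamma α)
        = A * c ^ α / Real.Gamma (α + 1) + 2 * ε₁ * A := by
      rw [hΓadd]; field_simp
    have h7 : A * c ^ α / Real.Gamma (α + 1)
        = A / Real.Gamma (α + 1) + A * (c ^ α - 1) / Real.Gamma (α + 1) := by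
      field_simp; ring
    have h8 : A * (c ^ α - 1) / Real.Gamma (α + 1) < ε / 2 := by
      have : A * ((-Real.log (Real.exp (-1) + (-1) * δ)) ^ α - 1) / Real.Gamma (α + 1)
          = A * (c ^ α - 1) / Real.Gamma (α + 1) := by
        congr 3
        rw [hc_def, ha_def]; ring_nf
      rw [this] at hδ3
      exact lt_of_le_of_lt (le_abs_self _) hδ3
    have h9 : 2 * ε₁ * A = ε / 4 := by
      rw [hε₁_def]; field_simp; ring
    linarith

lemma klower {A α : ℝ} (hA : 0 < A) (hα : 0 < α) {ε : ℝ} (hε : 0 < ε) :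
    ∃ p : ℝ[X], (∀ x ∈ Icc (0:ℝ) 1, x * p.eval x ≤ 1) ∧
      (∀ x ∈ Icc (0:ℝ) (Real.exp (-1)), x * p.eval x ≤ 0) ∧
      A / Real.Gamma (α + 1) - ε ≤ A * kS α p := by
  obtain ⟨δ, hδ0, hδ1, hδ2, hδ3⟩ := kdelta hα hA hε 1 (Or.inl rfl)
  set a : ℝ := Real.exp (-1) with ha_def
  have ha : 0 < a := Real.exp_pos _
  have haδ : 0 < a + δ := by linarith
  set c : ℝ := -Real.log (a + δ) with hc_def
  have hexpc : Real.exp (-c) = a + δ := by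
    rw [hc_def, neg_neg, Real.exp_log haδ]
  have hc0 : 0 ≤ c := by
    rw [hc_def]
    simp only [neg_nonneg]
    exact Real.log_nonpos haδ.le (by linarith)
  set ε₁ : ℝ := ε / (8 * A) with hε₁_def
  have hε₁ : 0 < ε₁ := by positivity
  obtain ⟨q, hq⟩ := exists_polynomial_near_of_continuousOn 0 1 (kH a δ)
    (kH_contOn ha hδ0) ε₁ hε₁
  refine ⟨q - Polynomial.C ε₁, ?_, ?_, ?_⟩
  · intro x hx
    have h1 := abs_lt.1 (hq x hx)
    have h2 : (q - Polynomial.C ε₁).eval x ≤ kH a δ x := by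
      simp only [Polynomial.eval_sub, Polynomial.eval_C]
      linarith [h1.2]
    calc x * (q - Polynomial.C ε₁).eval x ≤ x * kH a δ x :=
          mul_le_mul_of_nonneg_left h2 hx.1
      _ ≤ 1 := kH_mul_le_one hx.1
  · intro x hx
    have hx1 : x ≤ 1 := by
      have : a ≤ 1 := Real.exp_le_one_iff.2 (by norm_num)
      linarith [hx.2]
    have h1 := abs_lt.1 (hq x ⟨hx.1, hx1⟩)
    have hH0 : kH a δ x = 0 := kH_eq_zero hδ0 hx.1 hx.2
    have h2 : (q - Polynomial.C ε₁).eval x ≤ 0 := by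
      simp only [Polynomial.eval_sub, Polynomial.eval_C]
      rw [← hH0]; linarith [h1.2]
    exact mul_nonpos_of_nonneg_of_nonpos hx.1 h2
  · have hbd : ∀ u : ℝ, 0 < u →
        (if u ≤ c then 1 else 0) - 2 * ε₁ * Real.exp (-u)
          ≤ Real.exp (-u) * (q - Polynomial.C ε₁).eval (Real.exp (-u)) := by
      intro u hu
      set x : ℝ := Real.exp (-u) with hx_def
      have hx0 : 0 < x := Real.exp_pos _
      have hx1 : x ≤ 1 := Real.exp_le_one_iff.2 (by linarith)
      have h1 := abs_lt.1 (hq x ⟨hx0.le, hx1⟩)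
      have h2 : kH a δ x - 2 * ε₁ ≤ (q - Polynomial.C ε₁).eval x := by
        simp only [Polynomial.eval_sub, Polynomial.eval_C]
        linarith [h1.1]
      have h3 : x * kH a δ x - 2 * ε₁ * x ≤ x * (q - Polynomial.C ε₁).eval x := by
        calc x * kH a δ x - 2 * ε₁ * x = x * (kH a δ x - 2 * ε₁) := by ring
          _ ≤ x * (q - Polynomial.C ε₁).eval x := mul_le_mul_of_nonneg_left h2 hx0.le
      by_cases hcase : u ≤ c
      · rw [if_pos hcase]
        have hxaδ : a + δ ≤ x := by
          rw [← hexpc, hx_def]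
          exact Real.exp_le_exp.2 (by linarith)
        have hHx : kH a δ x = x⁻¹ := kH_eq_inv hδ0 hxaδ (by linarith)
        rw [hHx, mul_inv_cancel₀ hx0.ne'] at h3
        linarith
      · rw [if_neg hcase]
        have h4 : 0 ≤ x * kH a δ x := mul_nonneg hx0.le (kH_nonneg hx0.le)
        linarith
    have h4 := kS_ge hα (q - Polynomial.C ε₁) hc0 hε₁.le hbd
    have hΓpos : 0 < Real.Gamma α := Real.Gamma_pos_of_pos hα
    have hΓ1pos : 0 < Real.Gamma (α + 1) := Real.Gamma_pos_of_pos (by linarith)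
    have h5 : A / Real.Gamma α * (c ^ α / α - 2 * ε₁ * Real.Gamma α)
        ≤ A * kS α (q - Polynomial.C ε₁) := by
      have hm := mul_le_mul_of_nonneg_left h4 (le_of_lt (div_pos hA hΓpos))
      calc A / Real.Gamma α * (c ^ α / α - 2 * ε₁ * Real.Gamma α)
          ≤ A / Real.Gamma α * (Real.Gamma α * kS α (q - Polynomial.C ε₁)) := hm
        _ = A * kS α (q - Polynomial.C ε₁) := by
            field_simp
    have hΓadd : Real.Gamma (α + 1) = α * Real.Gamma α := Real.Gamma_add_one hα.ne'
    have h6 : A / Real.Gamma α * (c ^ α / α - 2 * ε₁ * Real.Gamma α)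
        = A * c ^ α / Real.Gamma (α + 1) - 2 * ε₁ * A := by
      rw [hΓadd]; field_simp
    have h7 : A * c ^ α / Real.Gamma (α + 1)
        = A / Real.Gamma (α + 1) + A * (c ^ α - 1) / Real.Gamma (α + 1) := by
      field_simp; ring
    have h8 : -(ε / 2) < A * (c ^ α - 1) / Real.Gamma (α + 1) := by
      have heq : A * ((-Real.log (Real.exp (-1) + 1 * δ)) ^ α - 1) / Real.Gamma (α + 1)
          = A * (c ^ α - 1) / Real.Gamma (α + 1) := by
        congr 3
        rw [hc_def, ha_def]; ring_nf
      rw [heq] at hδ3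
      linarith [neg_abs_le (A * (c ^ α - 1) / Real.Gamma (α + 1)), hδ3]
    have h9 : 2 * ε₁ * A = ε / 4 := by
      rw [hε₁_def]; field_simp; ring
    linarith


section
variable (μ : Measure ℝ) (A α : ℝ)

lemma kbase (hA : 0 < A) (hα : 0 < α)
    (hL : (fun t : ℝ => ∫ lam, Real.exp (-t * lam) ∂μ)
        ~[𝓝[>] (0:ℝ)] (fun t : ℝ => A * t ^ (-α))) :
    Tendsto (fun t : ℝ => t ^ α * ∫ lam, Real.exp (-t * lam) ∂μ)
      (𝓝[>] (0:ℝ)) (𝓝 A) := by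
  have hev : ∀ᶠ t in 𝓝[>] (0:ℝ), A * t ^ (-α) ≠ 0 := by
    filter_upwards [self_mem_nhdsWithin] with t ht
    have : (0:ℝ) < t := ht
    positivity
  have h1 := (isEquivalent_iff_tendsto_one hev).1 hL
  have h2 := h1.const_mul A
  rw [mul_one] at h2
  refine h2.congr' ?_
  filter_upwards [self_mem_nhdsWithin] with t (ht : (0:ℝ) < t)
  have htα : (0:ℝ) < t ^ α := Real.rpow_pos_of_pos ht α
  rw [Pi.div_apply, Real.rpow_neg ht.le]
  field_simp

lemma kmono (hA : 0 < A) (hα : 0 < α)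
    (hL : (fun t : ℝ => ∫ lam, Real.exp (-t * lam) ∂μ)
        ~[𝓝[>] (0:ℝ)] (fun t : ℝ => A * t ^ (-α))) {r : ℝ} (hr : 0 < r) :
    Tendsto (fun t : ℝ => t ^ α * ∫ lam, Real.exp (-(r * t) * lam) ∂μ)
      (𝓝[>] (0:ℝ)) (𝓝 (A * r ^ (-α))) := by
  have hmap : Tendsto (fun t : ℝ => r * t) (𝓝[>] (0:ℝ)) (𝓝[>] (0:ℝ)) := by
    apply tendsto_nhdsWithin_of_tendsto_nhds_of_eventually_within
    · have : Tendsto (fun t : ℝ => r * t) (𝓝 (0:ℝ)) (𝓝 (r * 0)) :=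
        (continuous_const.mul continuous_id).tendsto 0
      rw [mul_zero] at this
      exact this.mono_left nhdsWithin_le_nhds
    · filter_upwards [self_mem_nhdsWithin] with t (ht : (0:ℝ) < t)
      exact mul_pos hr ht
  have h2 := (kbase μ A α hA hα hL).comp hmap
  have h3 := h2.const_mul (r ^ (-α))
  rw [mul_comm] at h3
  refine h3.congr' ?_
  filter_upwards [self_mem_nhdsWithin] with t (ht : (0:ℝ) < t)
  show r ^ (-α) * ((r * t) ^ α * _) = _
  rw [Real.mul_rpow hr.le ht.le, Real.rpow_neg hr.le]
  have : (0:ℝ) < r ^ α := Real.rpow_pos_of_pos hr α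
  field_simp

lemma kpoly (hA : 0 < A) (hα : 0 < α)
    (hint : ∀ t : ℝ, 0 < t → Integrable (fun lam => Real.exp (-t * lam)) μ)
    (hL : (fun t : ℝ => ∫ lam, Real.exp (-t * lam) ∂μ)
        ~[𝓝[>] (0:ℝ)] (fun t : ℝ => A * t ^ (-α))) (p : ℝ[X]) :
    Tendsto (fun t : ℝ => t ^ α *
        ∫ lam, Real.exp (-t * lam) * p.eval (Real.exp (-t * lam)) ∂μ)
      (𝓝[>] (0:ℝ)) (𝓝 (A * kS α p)) := by
  have key : ∀ᶠ t in 𝓝[>] (0:ℝ),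
      t ^ α * ∫ lam, Real.exp (-t * lam) * p.eval (Real.exp (-t * lam)) ∂μ
        = ∑ j ∈ Finset.range (p.natDegree + 1),
            p.coeff j * (t ^ α * ∫ lam, Real.exp (-(((j:ℝ)+1) * t) * lam) ∂μ) := by
    filter_upwards [self_mem_nhdsWithin] with t (ht : (0:ℝ) < t)
    have : (fun lam => Real.exp (-t * lam) * p.eval (Real.exp (-t * lam)))
        = fun lam => ∑ j ∈ Finset.range (p.natDegree + 1),
            p.coeff j * Real.exp (-(((j:ℝ)+1) * t) * lam) := by
      ext lam; exact kexpand p t lam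
    have hi := integral_finset_sum (μ := μ) (Finset.range (p.natDegree + 1))
      (f := fun j lam => p.coeff j * Real.exp (-(((j:ℝ)+1) * t) * lam))
      (fun j _ => (hint (((j:ℝ)+1) * t)
        (mul_pos (by positivity) ht)).const_mul _)
    rw [this, hi, Finset.mul_sum]
    refine Finset.sum_congr rfl fun j _ => ?_
    rw [integral_const_mul]; ring
  have lim : Tendsto (fun t : ℝ => ∑ j ∈ Finset.range (p.natDegree + 1),
      p.coeff j * (t ^ α * ∫ lam, Real.exp (-(((j:ℝ)+1) * t) * lam) ∂μ))
      (𝓝[>] (0:ℝ))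
      (𝓝 (∑ j ∈ Finset.range (p.natDegree + 1),
        p.coeff j * (A * ((j:ℝ)+1) ^ (-α)))) := by
    refine tendsto_finset_sum _ fun j _ => ?_
    exact (kmono μ A α hA hα hL (by positivity : (0:ℝ) < (j:ℝ)+1)).const_mul _
  have : A * kS α p = ∑ j ∈ Finset.range (p.natDegree + 1),
      p.coeff j * (A * ((j:ℝ)+1) ^ (-α)) := by
    rw [kS, Finset.mul_sum]; refine Finset.sum_congr rfl fun j _ => by ring
  rw [this]
  refine lim.congr' ?_
  filter_upwards [key] with t h
  exact h.symm

end


lemma kintμ (μ : Measure ℝ)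
    (hint : ∀ t : ℝ, 0 < t → Integrable (fun lam => Real.exp (-t * lam)) μ)
    (p : ℝ[X]) {t : ℝ} (ht : 0 < t) :
    Integrable (fun lam => Real.exp (-t * lam) * p.eval (Real.exp (-t * lam))) μ := by
  have : (fun lam => Real.exp (-t * lam) * p.eval (Real.exp (-t * lam)))
      = fun lam => ∑ j ∈ Finset.range (p.natDegree + 1),
          p.coeff j * Real.exp (-(((j:ℝ)+1) * t) * lam) := by
    ext lam; exact kexpand p t lam
  rw [this]
  exact integrable_finset_sum _ fun j _ =>
    (hint (((j:ℝ)+1) * t) (mul_pos (by positivity) ht)).const_mul _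

/-- Karamata tauberian theorem: if `μ` is a positive Radon measure on
`[0,∞)` whose Laplace transform satisfies `∫ e^(-tλ) dμ(λ) ∼ A t^(-α)` as `t → 0⁺`,
then `μ([0,λ]) ∼ (A/Γ(α+1)) λ^α` as `λ → ∞`. -/
theorem stmt_9 (μ : Measure ℝ) (hsupp : μ (Iio 0) = 0)
    (A α : ℝ) (hA : 0 < A) (hα : 0 < α)
    (hint : ∀ t : ℝ, 0 < t → Integrable (fun lam => Real.exp (-t * lam)) μ)
    (hL : (fun t : ℝ => ∫ lam, Real.exp (-t * lam) ∂μ)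
        ~[𝓝[>] (0:ℝ)] (fun t : ℝ => A * t ^ (-α))) :
    (fun lam : ℝ => (μ (Iic lam)).toReal)
      ~[atTop] (fun lam : ℝ => A / Real.Gamma (α + 1) * lam ^ α) := by
  set l : ℝ := A / Real.Gamma (α + 1) with hl_def
  have hΓ1pos : 0 < Real.Gamma (α + 1) := Real.Gamma_pos_of_pos (by linarith)
  have hlpos : 0 < l := div_pos hA hΓ1pos
  -- a.e. nonneg
  have hae : ∀ᵐ lam ∂μ, 0 ≤ lam := by
    rw [ae_iff]
    have h0 : {a : ℝ | ¬ 0 ≤ a} = Iio 0 := by ext a; simp [not_le]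
    rw [h0]; exact hsupp
  -- finiteness of μ (Iic c)
  have hfin : ∀ c : ℝ, μ (Iic c) < ⊤ := by
    intro c
    have h1 := (hint 1 one_pos).measure_ge_lt_top (Real.exp_pos (-c))
    refine lt_of_le_of_lt (measure_mono ?_) h1
    intro lam hlam
    simp only [mem_setOf_eq]
    exact Real.exp_le_exp.2 (by simp at hlam ⊢; linarith)
  -- indicator integral
  have hind : ∀ c : ℝ, (μ (Iic c)).toReal
      = ∫ lam, (Iic c).indicator (fun _ => (1:ℝ)) lam ∂μ := by
    intro c
    rw [integral_indicator measurableSet_Iic, setIntegral_const, smul_eq_mul, mul_one, measureReal_def]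
  have hindint : ∀ c : ℝ, Integrable ((Iic c).indicator (fun _ => (1:ℝ))) μ := by
    intro c
    rw [integrable_indicator_iff measurableSet_Iic]
    exact integrableOn_const (hfin c).ne
  -- main limit
  have hmain : Tendsto (fun t : ℝ => t ^ α * (μ (Iic t⁻¹)).toReal)
      (𝓝[>] (0:ℝ)) (𝓝 l) := by
    rw [tendsto_order]
    constructor
    · intro b hb
      obtain ⟨p, hp1, hp2, hp3⟩ := klower (α := α) hA hα (half_pos (sub_pos.2 hb))
      have hblt : b < A * kS α p := by linarith
      have hev := (kpoly μ A α hA hα hint hL p).eventually (lt_mem_nhds hblt)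
      filter_upwards [hev, self_mem_nhdsWithin] with t h1 (ht : (0:ℝ) < t)
      have hcomp : ∫ lam, Real.exp (-t * lam) * p.eval (Real.exp (-t * lam)) ∂μ
          ≤ (μ (Iic t⁻¹)).toReal := by
        rw [hind]
        apply integral_mono_ae (kintμ μ hint p ht) (hindint _)
        filter_upwards [hae] with lam hlam
        set x : ℝ := Real.exp (-t * lam) with hx_def
        have hx0 : 0 < x := Real.exp_pos _
        have hx1 : x ≤ 1 := Real.exp_le_one_iff.2 (by nlinarith)
        by_cases hcase : lam ≤ t⁻¹
        · rw [Set.indicator_of_mem (mem_Iic.2 hcase)]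
          exact hp1 x ⟨hx0.le, hx1⟩
        · rw [Set.indicator_of_notMem (by simpa using hcase)]
          push_neg at hcase
          have : t * lam > 1 := by
            rw [← mul_inv_cancel₀ ht.ne']
            exact (mul_lt_mul_iff_right₀ ht).2 hcase
          have hxe : x ≤ Real.exp (-1) := Real.exp_le_exp.2 (by linarith)
          exact hp2 x ⟨hx0.le, hxe⟩
      calc b < t ^ α * ∫ lam, Real.exp (-t * lam) * p.eval (Real.exp (-t * lam)) ∂μ := h1
        _ ≤ t ^ α * (μ (Iic t⁻¹)).toReal :=
            mul_le_mul_of_nonneg_left hcomp (Real.rpow_nonneg ht.le α)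
    · intro b hb
      obtain ⟨p, hp1, hp2, hp3⟩ := kupper (α := α) hA hα (half_pos (sub_pos.2 hb))
      have hblt : A * kS α p < b := by linarith
      have hev := (kpoly μ A α hA hα hint hL p).eventually (gt_mem_nhds hblt)
      filter_upwards [hev, self_mem_nhdsWithin] with t h1 (ht : (0:ℝ) < t)
      have hcomp : (μ (Iic t⁻¹)).toReal
          ≤ ∫ lam, Real.exp (-t * lam) * p.eval (Real.exp (-t * lam)) ∂μ := by
        rw [hind]
        apply integral_mono_ae (hindint _) (kintμ μ hint p ht)
        filter_upwards [hae] with lam hlam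
        set x : ℝ := Real.exp (-t * lam) with hx_def
        have hx0 : 0 < x := Real.exp_pos _
        have hx1 : x ≤ 1 := Real.exp_le_one_iff.2 (by nlinarith)
        by_cases hcase : lam ≤ t⁻¹
        · rw [Set.indicator_of_mem (mem_Iic.2 hcase)]
          have htl : t * lam ≤ 1 := by
            calc t * lam ≤ t * t⁻¹ := (mul_le_mul_iff_right₀ ht).2 hcase
              _ = 1 := mul_inv_cancel₀ ht.ne'
          have hxe : Real.exp (-1) ≤ x := Real.exp_le_exp.2 (by linarith)
          exact hp2 x ⟨hxe, hx1⟩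
        · rw [Set.indicator_of_notMem (by simpa using hcase)]
          exact hp1 x ⟨hx0.le, hx1⟩
      calc t ^ α * (μ (Iic t⁻¹)).toReal
          ≤ t ^ α * ∫ lam, Real.exp (-t * lam) * p.eval (Real.exp (-t * lam)) ∂μ :=
            mul_le_mul_of_nonneg_left hcomp (Real.rpow_nonneg ht.le α)
        _ < b := h1
  -- convert to atTop
  have hconv : Tendsto (fun lam : ℝ => (lam ^ α)⁻¹ * (μ (Iic lam)).toReal)
      atTop (𝓝 l) := by
    have := hmain.comp tendsto_inv_atTop_nhdsGT_zero
    refine this.congr' ?_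
    filter_upwards [eventually_gt_atTop (0:ℝ)] with lam hlam
    show (lam⁻¹) ^ α * (μ (Iic lam⁻¹⁻¹)).toReal = _
    rw [inv_inv, Real.inv_rpow hlam.le]
  rw [isEquivalent_iff_tendsto_one]
  · have h2 := hconv.div_const l
    rw [div_self hlpos.ne'] at h2
    refine h2.congr' ?_
    filter_upwards [eventually_gt_atTop (0:ℝ)] with lam hlam
    have hxa : (0:ℝ) < lam ^ α := Real.rpow_pos_of_pos hlam α
    rw [Pi.div_apply]
    field_simp
    try ring
    try tauto
  · filter_upwards [eventually_gt_atTop (0:ℝ)] with lam hlam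
    have hxa : (0:ℝ) < lam ^ α := Real.rpow_pos_of_pos hlam α
    positivity
end
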